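/- For an inaccessible cardinal κ and ordinal λ < κ, the tail fast function poset F_{[λ,κ)} = { p ∈ F_κ : dom(p) ⊆ [λ,κ) } is <δ-closed, where δ is the least inaccessible cardinal ≥ λ; in particular, any descending sequence of conditions of length < δ has its union as a lower bound. -/

import Mathlib

/-!
For an inaccessible cardinal `κ` and an ordinal `λ < κ`, the tail fast
function poset `F_{[λ,κ)} = { p ∈ F_κ : dom(p) ⊆ [λ,κ) }` is `<δ`-closed,
where `δ` is the least inaccessible cardinal `≥ λ`; in particular, any
descending sequence of conditions of length `< δ` has its union as a lower
bound.  (Here `q ≤ p` means `q ⊇ p`, so "descending" means the carriers grow.)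
-/

/-- `γ` is an inaccessible ordinal. -/
def IsInaccOrd (γ : Ordinal) : Prop :=
  γ.card.IsInaccessible ∧ γ.card.ord = γ

/-- A condition of fast function forcing `F_κ`. -/
structure FastFn (κ : Ordinal) where
  carrier : Set (Ordinal × Ordinal)
  isFunc : ∀ ⦃a b c : Ordinal⦄, (a, b) ∈ carrier → (a, c) ∈ carrier → b = c
  mem_lt : ∀ ⦃x⦄, x ∈ carrier → x.1 < κ ∧ x.2 < κ
  dom_inacc : ∀ ⦃a b : Ordinal⦄, (a, b) ∈ carrier → IsInaccOrd a
  image_lt : ∀ ⦃a b c d : Ordinal⦄, (a, b) ∈ carrier → (c, d) ∈ carrier →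
    c < a → d < a
  small : ∀ γ : Ordinal, γ ≤ κ → IsInaccOrd γ →
    Cardinal.mk {x : Ordinal × Ordinal // x ∈ carrier ∧ x.1 < γ} <
      Cardinal.lift.{1, 0} γ.card

/-- Fast function conditions are ordered by reverse inclusion. -/
instance {κ : Ordinal} : LE (FastFn κ) :=
  ⟨fun p q => q.carrier ⊆ p.carrier⟩

/-- Lifting preserves regularity. -/
lemma isRegular_lift {c : Cardinal.{u}} (hc : c.IsRegular) :
    (Cardinal.lift.{v} c).IsRegular := by
  constructor
  · simpa using hc.1
  · rw [← Cardinal.lift_ord, ← Ordinal.lift_cof, hc.cof_eq]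

theorem fastFn_tail_closed
    (κ : Cardinal) (hκ : κ.IsInaccessible)
    (lam δ : Ordinal) (hlam : lam < κ.ord)
    (hδ_inacc : IsInaccOrd δ) (hδ_ge : lam ≤ δ)
    (hδ_least : ∀ μ : Ordinal, IsInaccOrd μ → lam ≤ μ → δ ≤ μ) :
    ∀ o : Ordinal, o < δ →
      ∀ f : Set.Iio o → {q : FastFn κ.ord // ∀ x ∈ q.carrier, lam ≤ x.1},
        (∀ a b : Set.Iio o, a ≤ b → (f a).1.carrier ⊆ (f b).1.carrier) →
        ∃ l : {q : FastFn κ.ord // ∀ x ∈ q.carrier, lam ≤ x.1},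
          l.1.carrier = (⋃ a, (f a).1.carrier) ∧ ∀ a, l ≤ f a := by
  intro o ho f hmono
  have hdir : ∀ a b : Set.Iio o, ∃ c, (f a).1.carrier ⊆ (f c).1.carrier ∧
      (f b).1.carrier ⊆ (f c).1.carrier := by
    intro a b
    rcases le_total a b with h | h
    · exact ⟨b, hmono a b h, subset_rfl⟩
    · exact ⟨a, subset_rfl, hmono b a h⟩
  refine ⟨⟨⟨⋃ a, (f a).1.carrier, ?_, ?_, ?_, ?_, ?_⟩, ?_⟩, rfl, ?_⟩
  · -- isFunc
    intro a b c hb hc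
    obtain ⟨i, hi⟩ := Set.mem_iUnion.1 hb
    obtain ⟨j, hj⟩ := Set.mem_iUnion.1 hc
    obtain ⟨k, hik, hjk⟩ := hdir i j
    exact (f k).1.isFunc (hik hi) (hjk hj)
  · -- mem_lt
    intro x hx
    obtain ⟨i, hi⟩ := Set.mem_iUnion.1 hx
    exact (f i).1.mem_lt hi
  · -- dom_inacc
    intro a b hab
    obtain ⟨i, hi⟩ := Set.mem_iUnion.1 hab
    exact (f i).1.dom_inacc hi
  · -- image_lt
    intro a b c d hab hcd hca
    obtain ⟨i, hi⟩ := Set.mem_iUnion.1 hab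
    obtain ⟨j, hj⟩ := Set.mem_iUnion.1 hcd
    obtain ⟨k, hik, hjk⟩ := hdir i j
    exact (f k).1.image_lt (hik hi) (hjk hj) hca
  · -- small
    intro γ hγκ hγ
    by_cases hne : ∃ x : Ordinal × Ordinal, (x ∈ ⋃ a, (f a).1.carrier) ∧ x.1 < γ
    · obtain ⟨x, hx, hxγ⟩ := hne
      obtain ⟨i, hi⟩ := Set.mem_iUnion.1 hx
      -- every element of any carrier has first coordinate ≥ δ, so δ < γ
      have hδγ : δ < γ := by
        have hx1 : IsInaccOrd x.1 := by
          obtain ⟨a, b⟩ := x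
          exact (f i).1.dom_inacc hi
        exact lt_of_le_of_lt (hδ_least x.1 hx1 ((f i).2 x hi)) hxγ
      have hδcard : δ.card < γ.card := by
        rw [← Cardinal.lt_ord, hγ.2]; exact hδγ
      have hocard : o.card < γ.card := by
        refine lt_trans ?_ hδcard
        rw [← Cardinal.lt_ord, hδ_inacc.2]; exact ho
      -- rewrite the set as a union of the restricted pieces
      have hset : {x : Ordinal × Ordinal | (x ∈ ⋃ a, (f a).1.carrier) ∧ x.1 < γ} =
          ⋃ a, {x : Ordinal × Ordinal | x ∈ (f a).1.carrier ∧ x.1 < γ} := by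
        ext y
        simp only [Set.mem_setOf_eq, Set.mem_iUnion]
        tauto
      have hreg : (Cardinal.lift.{1, 0} γ.card).IsRegular := isRegular_lift hγ.1.isRegular
      have hι : Cardinal.mk (Set.Iio o) < Cardinal.lift.{1, 0} γ.card := by
        rw [Ordinal.mk_Iio_ordinal]
        exact Cardinal.lift_lt.2 hocard
      calc Cardinal.mk {x : Ordinal × Ordinal // (x ∈ ⋃ a, (f a).1.carrier) ∧ x.1 < γ}
          = Cardinal.mk (⋃ a, {x : Ordinal × Ordinal | x ∈ (f a).1.carrier ∧ x.1 < γ}) := by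
            rw [← hset]; rfl
        _ ≤ Cardinal.mk (Set.Iio o) *
              ⨆ a : Set.Iio o,
                Cardinal.mk {x : Ordinal × Ordinal | x ∈ (f a).1.carrier ∧ x.1 < γ} :=
            Cardinal.mk_iUnion_le _
        _ < Cardinal.lift.{1, 0} γ.card := by
            apply Cardinal.mul_lt_of_lt hreg.1 hι
            exact Cardinal.iSup_lt_of_isRegular hreg hι
              (fun a => (f a).1.small γ hγκ hγ)
    · -- the restricted set is empty
      push_neg at hne
      have : {x : Ordinal × Ordinal | (x ∈ ⋃ a, (f a).1.carrier) ∧ x.1 < γ} = ∅ := by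
        ext y; simp only [Set.mem_setOf_eq, Set.mem_empty_iff_false, iff_false, not_and]
        exact fun h => not_lt.2 (hne y h)
      have hmk : Cardinal.mk {x : Ordinal × Ordinal //
          (x ∈ ⋃ a, (f a).1.carrier) ∧ x.1 < γ} = 0 := by
        rw [Cardinal.mk_eq_zero_iff]
        exact ⟨fun y => (Set.eq_empty_iff_forall_notMem.1 this y.1) y.2⟩
      rw [hmk]
      have h0 : (0 : Cardinal.{0}) < γ.card := lt_trans Cardinal.aleph0_pos hγ.1.1
      have := Cardinal.lift_lt.{0,1}.2 h0
      simpa using this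
  · -- lam bound
    intro x hx
    obtain ⟨i, hi⟩ := Set.mem_iUnion.1 hx
    exact (f i).2 x hi
  · -- lower bound
    intro a
    show (f a).1.carrier ⊆ ⋃ b, (f b).1.carrier
    exact Set.subset_iUnion (fun b => (f b).1.carrier) a
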